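/- Let S be a relational structure admitting a finite monomorphic decomposition with minimal monomorphic decomposition {B_1,…,B_s}, and let B_j be one of the blocks with induced substructure B_j = S[B_j]. If there is a finite structure A with T(A, S[B_j]) = ∞ (A does not have a finite embedding big Ramsey degree in S[B_j]), then T(A, S) = ∞; consequently, if S has finite big Ramsey degrees then so does every S[B_i]. -/

import Mathlib

open FirstOrder

set_option linter.unusedVariables false

/-- For a relational language, any subset of a structure carries an induced structure. -/
noncomputable instance indStruct {L : Language} [L.IsRelational] {S : Type} [L.Structure S]
    (A : Set S) : L.Structure A where
  funMap {n} f _ := isEmptyElim f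
  RelMap {n} R v := Language.Structure.RelMap R fun i => ((v i : A) : S)

/-- `X` and `Y` induce isomorphic substructures of `S`. -/
def IsoSub (L : Language) [L.IsRelational] {S : Type} [L.Structure S] (X Y : Set S) : Prop :=
  Nonempty ((X : Set S) ≃[L] (Y : Set S))

/-- A monomorphic decomposition of a relational structure. -/
def IsMonoDecomp (L : Language) [L.IsRelational] (S : Type) [L.Structure S]
    {I : Type} (E : I → Set S) : Prop :=
  (∀ i, (E i).Nonempty) ∧ (∀ i j, i ≠ j → Disjoint (E i) (E j)) ∧ (⋃ i, E i) = Set.univ ∧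
    ∀ X Y : Finset S, (∀ i, ((X : Set S) ∩ E i).ncard = ((Y : Set S) ∩ E i).ncard) →
      IsoSub L (X : Set S) (Y : Set S)

/-- The minimal monomorphic decomposition: every monomorphic decomposition refines it. -/
def IsMinimalMonoDecomp (L : Language) [L.IsRelational] (S : Type) [L.Structure S]
    {I : Type} (E : I → Set S) : Prop :=
  IsMonoDecomp L S E ∧
    ∀ {J : Type} (F : J → Set S), IsMonoDecomp L S F → ∀ j, ∃ i, F j ⊆ E i

/-- `A` has a finite (embedding) big Ramsey degree in `C`. -/
def HasFinBRD (L : Language) (A C : Type) [L.Structure A] [L.Structure C] : Prop :=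
  ∃ t : ℕ, ∀ (k : ℕ) (χ : (A ↪[L] C) → Fin k), ∃ w : C ↪[L] C,
    (χ '' {g : A ↪[L] C | ∃ f : A ↪[L] C, g = w.comp f}).ncard ≤ t

section BRDAux
variable {L : Language} [L.IsRelational] {S : Type} [L.Structure S]

noncomputable def inclEmb (A : Set S) : (A : Set S) ↪[L] S where
  toFun := Subtype.val
  inj' := Subtype.val_injective
  map_fun' := fun {n} f _ => isEmptyElim f
  map_rel' := fun {n} R x => Iff.rfl

noncomputable def restrEmb (A : Set S) (v : S ↪[L] S) (h : ∀ x ∈ A, v x ∈ A) :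
    (A : Set S) ↪[L] (A : Set S) where
  toFun x := ⟨v x, h x x.2⟩
  inj' x y hxy := Subtype.ext (v.injective (congrArg Subtype.val hxy))
  map_fun' := fun {n} f _ => isEmptyElim f
  map_rel' := fun {n} R x => v.map_rel R fun i => (x i : S)

noncomputable def imgEquiv (v : S ↪[L] S) (X : Set S) :
    (X : Set S) ≃[L] (v '' X : Set S) where
  toEquiv := Equiv.Set.image v X v.injective
  map_fun' := fun {n} f _ => isEmptyElim f
  map_rel' := fun {n} R x => v.map_rel R fun i => (x i : S)

variable {L : Language} [L.IsRelational] {S : Type} [L.Structure S]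

lemma exists_inj_perm {s : ℕ} (B : Fin s → Set S) (hmin : IsMinimalMonoDecomp L S B)
    (v : S ↪[L] S) :
    ∃ σ : Fin s → Fin s, Function.Injective σ ∧ ∀ i, ∀ x ∈ B i, v x ∈ B (σ i) := by
  classical
  obtain ⟨⟨hne, hdisj, hcov, hmono⟩, hrefine⟩ := hmin
  set F : {m : Fin s // (v ⁻¹' B m).Nonempty} → Set S := fun m => v ⁻¹' B m.1 with hF
  have hcovF : (⋃ m, F m) = Set.univ := by
    ext x
    simp only [Set.mem_iUnion, Set.mem_univ, iff_true]
    have hvx : v x ∈ ⋃ i, B i := hcov ▸ Set.mem_univ _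
    obtain ⟨i, hi⟩ := Set.mem_iUnion.mp hvx
    exact ⟨⟨i, ⟨x, hi⟩⟩, hi⟩
  have hFdecomp : IsMonoDecomp L S F := by
    refine ⟨fun m => m.2, ?_, hcovF, ?_⟩
    · intro m m' hmm'
      exact Disjoint.preimage v (hdisj m.1 m'.1 (fun h => hmm' (Subtype.ext h)))
    · intro X Y hXY
      have h1 : ∀ i : Fin s,
          ((↑(X.image v) : Set S) ∩ B i).ncard = ((↑(Y.image v) : Set S) ∩ B i).ncard := by
        intro i
        rw [Finset.coe_image, Finset.coe_image, ← Set.image_inter_preimage,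
          ← Set.image_inter_preimage, Set.ncard_image_of_injective _ v.injective,
          Set.ncard_image_of_injective _ v.injective]
        by_cases hpre : (v ⁻¹' B i).Nonempty
        · exact hXY ⟨i, hpre⟩
        · rw [Set.not_nonempty_iff_eq_empty.mp hpre, Set.inter_empty, Set.inter_empty]
      have h2 := hmono (X.image v) (Y.image v) h1
      rw [Finset.coe_image, Finset.coe_image] at h2
      obtain ⟨e⟩ := h2
      exact ⟨((imgEquiv v (Y : Set S)).symm.comp e).comp (imgEquiv v (X : Set S))⟩
  have hsub := hrefine F hFdecomp
  choose φ hφ using hsub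
  have hsurj : Function.Surjective φ := by
    intro i
    obtain ⟨x, hx⟩ := hne i
    have hvx : v x ∈ ⋃ m, B m := hcov ▸ Set.mem_univ _
    obtain ⟨m, hm⟩ := Set.mem_iUnion.mp hvx
    refine ⟨⟨m, ⟨x, hm⟩⟩, ?_⟩
    have hx2 : x ∈ B (φ ⟨m, ⟨x, hm⟩⟩) := hφ _ hm
    by_contra hne'
    exact Set.disjoint_left.mp (hdisj _ i hne') hx2 hx
  have hcard : Fintype.card {m : Fin s // (v ⁻¹' B m).Nonempty} = Fintype.card (Fin s) :=
    le_antisymm (Fintype.card_subtype_le _) (Fintype.card_le_of_surjective φ hsurj)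
  have hinjφ : Function.Injective φ :=
    ((Fintype.bijective_iff_surjective_and_card φ).mpr ⟨hsurj, hcard⟩).1
  choose ψ hψ using hsurj
  refine ⟨fun i => (ψ i).1, ?_, ?_⟩
  · intro i i' h
    have : ψ i = ψ i' := Subtype.ext h
    rw [← hψ i, ← hψ i', this]
  · intro i x hx
    have hxF : x ∈ ⋃ m, F m := hcovF ▸ Set.mem_univ _
    obtain ⟨m, hm⟩ := Set.mem_iUnion.mp hxF
    have hx2 : x ∈ B (φ m) := hφ _ hm
    have hφm : φ m = i := by
      by_contra hne'
      exact Set.disjoint_left.mp (hdisj _ i hne') hx2 hx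
    have hmψ : m = ψ i := hinjφ (by rw [hφm, hψ i])
    show v x ∈ B (ψ i).1
    rw [← hmψ]
    exact hm
variable {L : Language} [L.IsRelational] {S : Type} [L.Structure S]

noncomputable def embPow (v : S ↪[L] S) : ℕ → (S ↪[L] S)
  | 0 => Language.Embedding.refl L S
  | (n+1) => v.comp (embPow v n)

lemma inclEmb_comp_inj {A : Type} [L.Structure A] (X : Set S)
    (f₁ f₂ : A ↪[L] (X : Set S)) (h : (inclEmb X).comp f₁ = (inclEmb X).comp f₂) : f₁ = f₂ := by
  ext a
  have := DFunLike.congr_fun h a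
  exact this

end BRDAux

/-- If a block of the minimal monomorphic decomposition fails to have finite big Ramsey
degrees then so does the whole structure; consequently, if `S` has finite big Ramsey
degrees then so does every block. -/
theorem blocks_finite_brd (L : Language) [L.IsRelational]
    (S : Type) [L.Structure S] {s : ℕ} (B : Fin s → Set S)
    (hmin : IsMinimalMonoDecomp L S B) :
    (∀ (j : Fin s) (A : Type) (iA : L.Structure A), Finite A →
        ¬ @HasFinBRD L A (B j) iA _ → ¬ @HasFinBRD L A S iA _) ∧
      ((∀ (A : Type) (iA : L.Structure A), Finite A → @HasFinBRD L A S iA _) →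
        ∀ (i : Fin s) (A : Type) (iA : L.Structure A), Finite A →
          @HasFinBRD L A (B i) iA _) := by
    classical
  suffices H : ∀ (j : Fin s) (A : Type) (iA : L.Structure A), Finite A →
      ¬ @HasFinBRD L A (B j) iA _ → ¬ @HasFinBRD L A S iA _ by
    refine ⟨H, fun hall i A iA hA => ?_⟩
    by_contra hnB
    exact H i A iA hA hnB (hall A iA hA)
  intro j A iA hA hnB hS
  apply hnB
  letI := iA
  obtain ⟨t, ht⟩ := hS
  refine ⟨t, ?_⟩
  intro k χ
  rcases isEmpty_or_nonempty (A ↪[L] (B j : Set S)) with he | hne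
  · refine ⟨Language.Embedding.refl L _, ?_⟩
    have hempty : {g : A ↪[L] (B j : Set S) | ∃ f, g = (Language.Embedding.refl L _).comp f} = ∅ :=
      Set.eq_empty_of_isEmpty _
    rw [hempty, Set.image_empty, Set.ncard_empty]
    exact Nat.zero_le t
  · obtain ⟨f₀⟩ := hne
    have hk : 0 < k := (χ f₀).pos
    set ι : (B j : Set S) ↪[L] S := inclEmb (B j) with hι
    set χ' : (A ↪[L] S) → Fin k := fun g =>
      if h : ∃ f : A ↪[L] (B j : Set S), g = ι.comp f then χ h.choose else ⟨0, hk⟩ with hχ'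
    obtain ⟨w, hw⟩ := ht k χ'
    obtain ⟨σ, hσinj, hσ⟩ := exists_inj_perm B hmin w
    set π : Equiv.Perm (Fin s) := Equiv.ofBijective σ (Finite.injective_iff_bijective.mp hσinj)
      with hπdef
    have key : ∀ n : ℕ, ∀ i : Fin s, ∀ x ∈ B i,
        embPow w n x ∈ B ((π ^ n : Equiv.Perm (Fin s)) i) := by
      intro n
      induction n with
      | zero => intro i x hx; simp only [pow_zero, Equiv.Perm.one_apply]; exact hx
      | succ n ih =>
        intro i x hx
        have h2 := hσ _ _ (ih i x hx)
        have hπ : ((π ^ (n+1) : Equiv.Perm (Fin s)) i) = σ ((π ^ n : Equiv.Perm (Fin s)) i) := by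
          rw [pow_succ']
          rfl
        rw [hπ]
        exact h2
    set n : ℕ := orderOf π with hn
    have hnpos : 0 < n := orderOf_pos π
    have hBj : ∀ x ∈ B j, embPow w n x ∈ B j := by
      intro x hx
      have := key n j x hx
      rwa [hn, pow_orderOf_eq_one, Equiv.Perm.one_apply] at this
    set w' : (B j : Set S) ↪[L] (B j : Set S) := restrEmb (B j) (embPow w n) hBj with hw'
    refine ⟨w', ?_⟩
    obtain ⟨m, hm⟩ : ∃ m, n = m + 1 := ⟨n - 1, (Nat.succ_pred_eq_of_pos hnpos).symm⟩
    have hsubset : χ '' {g | ∃ f, g = w'.comp f} ⊆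
        χ' '' {g : A ↪[L] S | ∃ f, g = w.comp f} := by
      rintro c ⟨g, ⟨f, rfl⟩, rfl⟩
      have hfactor : ι.comp (w'.comp f) = w.comp ((embPow w m).comp (ι.comp f)) := by
        ext a
        show (embPow w n) ((f a : S)) = w ((embPow w m) ((f a : S)))
        rw [hm]
        rfl
      refine ⟨ι.comp (w'.comp f), ⟨(embPow w m).comp (ι.comp f), hfactor⟩, ?_⟩
      have hcond : ∃ f' : A ↪[L] (B j : Set S), ι.comp (w'.comp f) = ι.comp f' :=
        ⟨w'.comp f, rfl⟩
      rw [hχ']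
      simp only [dif_pos hcond]
      congr 1
      exact inclEmb_comp_inj (B j) _ _ hcond.choose_spec.symm
    calc (χ '' {g | ∃ f, g = w'.comp f}).ncard
        ≤ (χ' '' {g : A ↪[L] S | ∃ f, g = w.comp f}).ncard :=
          Set.ncard_le_ncard hsubset (Set.toFinite _)
      _ ≤ t := hw
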